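/- Let G be a locally compact topological group with a Haar measure μ that is invariant under all left and right translations (G unimodular). Let Q ≤ P be compact open subgroups of G and let Ω ⊆ P be a finite subset such that P = ΩQ = QΩ. Then for every g ∈ G one has μ(QgQ) ≤ μ(PgP) ≤ |Ω|² · μ(QgQ), where QgQ = {q₁ g q₂ : q₁, q₂ ∈ Q} and PgP = {p₁ g p₂ : p₁, p₂ ∈ P}. -/

import Mathlib

open MeasureTheory

/-- Comparison of Haar measures of double cosets for nested compact open
subgroups: if `G` is a locally compact group with a bi-invariant Haar
measure `μ`, `Q ≤ P` are compact open subgroups, and `Ω ⊆ P` is a finite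
set with `P = ΩQ = QΩ`, then for every `g ∈ G`,
`μ(QgQ) ≤ μ(PgP) ≤ |Ω|² · μ(QgQ)`. -/
theorem haar_double_coset_comparison
    {G : Type*} [Group G] [TopologicalSpace G] [IsTopologicalGroup G]
    [LocallyCompactSpace G] [MeasurableSpace G] [BorelSpace G]
    (μ : Measure G) [μ.IsHaarMeasure] [μ.IsMulRightInvariant]
    (Q P : Subgroup G) (hQP : Q ≤ P)
    (hQc : IsCompact (Q : Set G)) (hQo : IsOpen (Q : Set G))
    (hPc : IsCompact (P : Set G)) (hPo : IsOpen (P : Set G))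
    (Ω : Finset G) (hΩP : (Ω : Set G) ⊆ (P : Set G))
    (hPQ1 : {x : G | ∃ ω ∈ Ω, ∃ q ∈ Q, x = ω * q} = (P : Set G))
    (hPQ2 : {x : G | ∃ q ∈ Q, ∃ ω ∈ Ω, x = q * ω} = (P : Set G))
    (g : G) :
    μ {x : G | ∃ q₁ ∈ Q, ∃ q₂ ∈ Q, x = q₁ * g * q₂} ≤
        μ {x : G | ∃ p₁ ∈ P, ∃ p₂ ∈ P, x = p₁ * g * p₂} ∧
    μ {x : G | ∃ p₁ ∈ P, ∃ p₂ ∈ P, x = p₁ * g * p₂} ≤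
        (Ω.card : ENNReal) ^ 2 * μ {x : G | ∃ q₁ ∈ Q, ∃ q₂ ∈ Q, x = q₁ * g * q₂} := by
  set S : Set G := {x : G | ∃ q₁ ∈ Q, ∃ q₂ ∈ Q, x = q₁ * g * q₂} with hS
  set T : Set G := {x : G | ∃ p₁ ∈ P, ∃ p₂ ∈ P, x = p₁ * g * p₂} with hT
  have himg : ∀ a b : G, μ ((fun x => a * x * b) '' S) = μ S := by
    intro a b
    have heq : (fun x => a * x * b) '' S = (fun x => a⁻¹ * (x * b⁻¹)) ⁻¹' S := by
      ext x
      constructor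
      · rintro ⟨y, hy, rfl⟩
        simpa [Set.mem_preimage, mul_assoc] using hy
      · intro h
        exact ⟨a⁻¹ * (x * b⁻¹), h, by group⟩
    rw [heq]
    have : (fun x : G => a⁻¹ * (x * b⁻¹)) = (fun y => a⁻¹ * y) ∘ (fun x => x * b⁻¹) := rfl
    rw [this, Set.preimage_comp, measure_preimage_mul_right, measure_preimage_mul]
  constructor
  · apply measure_mono
    rintro x ⟨q₁, hq₁, q₂, hq₂, rfl⟩
    exact ⟨q₁, hQP hq₁, q₂, hQP hq₂, rfl⟩
  · have hsub : T ⊆ ⋃ ω₁ ∈ Ω, ⋃ ω₂ ∈ Ω, (fun x => ω₁ * x * ω₂) '' S := by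
      rintro x ⟨p₁, hp₁, p₂, hp₂, rfl⟩
      have h1 : p₁ ∈ {x : G | ∃ ω ∈ Ω, ∃ q ∈ Q, x = ω * q} := by rw [hPQ1]; exact hp₁
      have h2 : p₂ ∈ {x : G | ∃ q ∈ Q, ∃ ω ∈ Ω, x = q * ω} := by rw [hPQ2]; exact hp₂
      obtain ⟨ω₁, hω₁, q₁, hq₁, rfl⟩ := h1
      obtain ⟨q₂, hq₂, ω₂, hω₂, rfl⟩ := h2
      refine Set.mem_biUnion hω₁ (Set.mem_biUnion hω₂ ?_)
      exact ⟨q₁ * g * q₂, ⟨q₁, hq₁, q₂, hq₂, rfl⟩, by group⟩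
    calc μ T ≤ μ (⋃ ω₁ ∈ Ω, ⋃ ω₂ ∈ Ω, (fun x => ω₁ * x * ω₂) '' S) := measure_mono hsub
      _ ≤ ∑ ω₁ ∈ Ω, μ (⋃ ω₂ ∈ Ω, (fun x => ω₁ * x * ω₂) '' S) := measure_biUnion_finset_le _ _
      _ ≤ ∑ ω₁ ∈ Ω, ∑ ω₂ ∈ Ω, μ ((fun x => ω₁ * x * ω₂) '' S) :=
          Finset.sum_le_sum fun ω₁ _ => measure_biUnion_finset_le _ _
      _ = ∑ ω₁ ∈ Ω, ∑ ω₂ ∈ Ω, μ S := by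
          simp only [himg]
      _ = (Ω.card : ENNReal) ^ 2 * μ S := by
          simp [Finset.sum_const, nsmul_eq_mul, sq, mul_assoc]
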